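/- Let G be a strongly connected simple digraph on n ≥ 2 vertices and 0 ≤ α < 1. Then μ_α(G) > α·Tr_max, where Tr_max is the maximum vertex transmission of G. -/

import Mathlib

open Matrix BigOperators

/-- Spectral radius of a real square matrix: the largest modulus of its complex eigenvalues. -/
noncomputable def specRad {n : ℕ} (M : Matrix (Fin n) (Fin n) ℝ) : ℝ :=
  sSup {r : ℝ | ∃ μ ∈ spectrum ℂ (M.map (fun x => (x : ℂ))), r = ‖μ‖}

/-- A matrix is irreducible iff its associated digraph is strongly connected. -/
def Irred {n : ℕ} (M : Matrix (Fin n) (Fin n) ℝ) : Prop :=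
  ∀ i j : Fin n, Relation.ReflTransGen (fun a b => M a b ≠ 0) i j

/-- A directed walk of length `k` from `i` to `j` in a digraph. -/
def DWalk {n : ℕ} (G : Digraph (Fin n)) (i j : Fin n) (k : ℕ) : Prop :=
  ∃ f : ℕ → Fin n, f 0 = i ∧ f k = j ∧ ∀ l < k, G.Adj (f l) (f (l + 1))

/-- A digraph is strongly connected iff every vertex can reach every vertex. -/
def SConn {n : ℕ} (G : Digraph (Fin n)) : Prop :=
  ∀ i j : Fin n, ∃ k : ℕ, DWalk G i j k

/-- A simple digraph has no loops. -/
def Loopless {n : ℕ} (G : Digraph (Fin n)) : Prop := ∀ i : Fin n, ¬ G.Adj i i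

/-- Directed distance from `i` to `j`. -/
noncomputable def ddist {n : ℕ} (G : Digraph (Fin n)) (i j : Fin n) : ℕ :=
  sInf {k : ℕ | DWalk G i j k}

/-- Transmission of vertex `i`: sum of distances from `i` to all vertices. -/
noncomputable def transm {n : ℕ} (G : Digraph (Fin n)) (i : Fin n) : ℝ :=
  ∑ j : Fin n, (ddist G i j : ℝ)

/-- The generalized distance matrix `D_α(G) = α·Diag(Tr) + (1-α)·D(G)`. -/
noncomputable def Dalpha {n : ℕ} (α : ℝ) (G : Digraph (Fin n)) : Matrix (Fin n) (Fin n) ℝ :=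
  α • Matrix.diagonal (transm G) + (1 - α) • (Matrix.of fun i j => (ddist G i j : ℝ))

/-- The `D_α` spectral radius of a digraph. -/
noncomputable def mualpha {n : ℕ} (α : ℝ) (G : Digraph (Fin n)) : ℝ :=
  specRad (Dalpha α G)

/-- Isomorphism of digraphs on `Fin n`. -/
def IsoD {n : ℕ} (G H : Digraph (Fin n)) : Prop :=
  ∃ e : Fin n ≃ Fin n, ∀ i j : Fin n, G.Adj i j ↔ H.Adj (e i) (e j)

/-- The digraph `K(n,k,m)`: vertices `0..k-1` form `K↔ₖ`, `k..k+m-1` form `K↔ₘ`,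
`k+m..n-1` form `K↔_{n-k-m}`; all arcs present except those from `K↔_{n-k-m}` to `K↔ₘ`. -/
def KD (n k m : ℕ) : Digraph (Fin n) :=
  ⟨fun i j => i ≠ j ∧ ¬(k + m ≤ (i : ℕ) ∧ k ≤ (j : ℕ) ∧ (j : ℕ) < k + m)⟩

/-- A directed walk staying inside a vertex set `A`. -/
def DWalkIn {n : ℕ} (G : Digraph (Fin n)) (A : Set (Fin n)) (i j : Fin n) (k : ℕ) : Prop :=
  ∃ f : ℕ → Fin n, f 0 = i ∧ f k = j ∧ (∀ l ≤ k, f l ∈ A) ∧ ∀ l < k, G.Adj (f l) (f (l + 1))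

/-- The induced subdigraph on `A` is strongly connected. -/
def SCOn {n : ℕ} (G : Digraph (Fin n)) (A : Set (Fin n)) : Prop :=
  ∀ i ∈ A, ∀ j ∈ A, ∃ k : ℕ, DWalkIn G A i j k

section Aux

lemma ddist_self {n : ℕ} (G : Digraph (Fin n)) (i : Fin n) : ddist G i i = 0 := by
  refine Nat.sInf_eq_zero.mpr (Or.inl ?_)
  exact ⟨fun _ => i, rfl, rfl, fun l hl => absurd hl (Nat.not_lt_zero l)⟩

lemma one_le_ddist {n : ℕ} (G : Digraph (Fin n)) (hsc : SConn G) {i j : Fin n} (h : i ≠ j) :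
    1 ≤ ddist G i j := by
  rcases Nat.eq_zero_or_pos (ddist G i j) with h0 | h1
  · exfalso
    have hmem : ddist G i j ∈ {k | DWalk G i j k} := Nat.sInf_mem (hsc i j)
    rw [h0] at hmem
    obtain ⟨f, hf0, hfk, -⟩ := hmem
    exact h (hf0.symm.trans hfk)
  · exact h1

lemma transm_nonneg {n : ℕ} (G : Digraph (Fin n)) (i : Fin n) : 0 ≤ transm G i :=
  Finset.sum_nonneg fun j _ => Nat.cast_nonneg _

lemma root_mem_spectrum {N : ℕ} (A : Matrix (Fin N) (Fin N) ℂ) (μ : ℂ)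
    (h : μ ∈ A.charpoly.roots) : μ ∈ spectrum ℂ A := by
  have hroot : A.charpoly.eval μ = 0 := Polynomial.isRoot_of_mem_roots h
  rw [spectrum.mem_iff]
  intro hu
  have h1 : (Matrix.charmatrix A).map (Polynomial.evalRingHom μ) =
      algebraMap ℂ (Matrix (Fin N) (Fin N) ℂ) μ - A := by
    ext i j
    by_cases hij : i = j
    · subst hij
      simp [Matrix.charmatrix_apply_eq, Matrix.algebraMap_matrix_apply]
    · simp [Matrix.charmatrix_apply_ne _ _ _ hij, Matrix.algebraMap_matrix_apply, hij]
  have hdet : (algebraMap ℂ (Matrix (Fin N) (Fin N) ℂ) μ - A).det = 0 := by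
    rw [← h1, ← RingHom.mapMatrix_apply, ← RingHom.map_det]
    simpa [Matrix.charpoly] using hroot
  have := (Matrix.isUnit_iff_isUnit_det _).mp hu
  rw [hdet] at this
  exact not_isUnit_zero this

lemma abs_multiset_sum (s : Multiset ℂ) :
    ‖s.sum‖ ≤ (s.map (fun z => ‖z‖)).sum := by
  induction s using Multiset.induction_on with
  | empty => simp
  | cons a s ih =>
    simp only [Multiset.sum_cons, Multiset.map_cons]
    exact (norm_add_le _ _).trans (by linarith)

lemma specRad_spec {N : ℕ} (hN : 0 < N) (M : Matrix (Fin N) (Fin N) ℝ) :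
    0 ≤ specRad M ∧
      ∀ μ ∈ spectrum ℂ (M.map (fun x => (x : ℂ))), ‖μ‖ ≤ specRad M := by
  have : Nonempty (Fin N) := ⟨⟨0, hN⟩⟩
  set A := M.map (fun x => (x : ℂ)) with hA
  have hset : {r : ℝ | ∃ μ ∈ spectrum ℂ A, r = ‖μ‖}
      = (fun z : ℂ => ‖z‖) '' spectrum ℂ A := by
    ext r
    simp [Set.mem_image, eq_comm]
  have hbdd : BddAbove {r : ℝ | ∃ μ ∈ spectrum ℂ A, r = ‖μ‖} := by
    rw [hset]
    exact ((Matrix.finite_spectrum A).image _).bddAbove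
  have hne : (spectrum ℂ A).Nonempty :=
    spectrum.nonempty_of_isAlgClosed_of_finiteDimensional ℂ A
  obtain ⟨μ0, hμ0⟩ := hne
  have hle : ∀ μ ∈ spectrum ℂ A, ‖μ‖ ≤ specRad M := fun μ hμ =>
    le_csSup hbdd ⟨μ, hμ, rfl⟩
  exact ⟨le_trans (norm_nonneg μ0) (hle μ0 hμ0), hle⟩

lemma trace_pow_le {N : ℕ} (hN : 0 < N) (M : Matrix (Fin N) (Fin N) ℝ) {m : ℕ} (hm : 0 < m) :
    (M ^ m).trace ≤ N * specRad M ^ m := by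
  have : Nonempty (Fin N) := ⟨⟨0, hN⟩⟩
  obtain ⟨hρ0, hρ⟩ := specRad_spec hN M
  set A := M.map (fun x => (x : ℂ)) with hA
  have hAm : A ^ m = (M ^ m).map (fun x => (x : ℂ)) := by
    have := map_pow (Complex.ofRealHom.mapMatrix : Matrix (Fin N) (Fin N) ℝ →+* Matrix (Fin N) (Fin N) ℂ) M m
    exact this.symm
  have htr : (A ^ m).trace = (((M ^ m).trace : ℝ) : ℂ) := by
    rw [hAm]
    simp [Matrix.trace, Matrix.diag, Matrix.map_apply]
  have hsum : (A ^ m).trace = ((A ^ m).charpoly.roots).sum :=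
    Matrix.trace_eq_sum_roots_charpoly _
  have hroots : ∀ ν ∈ (A ^ m).charpoly.roots, ‖ν‖ ≤ specRad M ^ m := by
    intro ν hν
    have hν' : ν ∈ spectrum ℂ (A ^ m) := root_mem_spectrum _ _ hν
    rw [spectrum.map_pow_of_pos A hm] at hν'
    obtain ⟨μ, hμ, rfl⟩ := hν'
    calc ‖μ ^ m‖ = ‖μ‖ ^ m := norm_pow _ _
      _ ≤ specRad M ^ m := pow_le_pow_left₀ (norm_nonneg μ) (hρ μ hμ) m
  have h1 : (M ^ m).trace ≤ ‖(A ^ m).trace‖ := by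
    rw [htr, Complex.norm_real, Real.norm_eq_abs]
    exact le_abs_self _
  have h2 : ‖(A ^ m).trace‖
      ≤ ((A ^ m).charpoly.roots.map (fun z => ‖z‖)).sum := by
    rw [hsum]
    exact abs_multiset_sum _
  have h3 : ((A ^ m).charpoly.roots.map (fun z => ‖z‖)).sum
      ≤ (Multiset.card ((A ^ m).charpoly.roots) : ℝ) * specRad M ^ m := by
    calc ((A ^ m).charpoly.roots.map (fun z => ‖z‖)).sum
        ≤ ((A ^ m).charpoly.roots.map (fun _ => specRad M ^ m)).sum :=
          Multiset.sum_map_le_sum_map _ _ hroots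
      _ = (Multiset.card ((A ^ m).charpoly.roots) : ℝ) * specRad M ^ m := by
          rw [Multiset.map_const', Multiset.sum_replicate, nsmul_eq_mul]
  have hcard : (Multiset.card ((A ^ m).charpoly.roots) : ℝ) ≤ N := by
    have hc := (A ^ m).charpoly.card_roots'
    have hdeg : (A ^ m).charpoly.natDegree = N := by
      rw [Matrix.charpoly_natDegree_eq_dim, Fintype.card_fin]
    rw [hdeg] at hc
    exact_mod_cast hc
  have h4 : (Multiset.card ((A ^ m).charpoly.roots) : ℝ) * specRad M ^ m
      ≤ N * specRad M ^ m :=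
    mul_le_mul_of_nonneg_right hcard (pow_nonneg hρ0 m)
  linarith

lemma pow_entry_nonneg {N : ℕ} {M : Matrix (Fin N) (Fin N) ℝ} (h : ∀ i j, 0 ≤ M i j)
    (k : ℕ) : ∀ i j, 0 ≤ (M ^ k) i j := by
  induction k with
  | zero =>
    intro i j
    rw [pow_zero]
    by_cases hij : i = j <;> simp [Matrix.one_apply, hij]
  | succ k ih =>
    intro i j
    rw [pow_succ, Matrix.mul_apply]
    exact Finset.sum_nonneg fun l _ => mul_nonneg (ih i l) (h l j)

lemma pow_two_k_diag_ge {N : ℕ} {M : Matrix (Fin N) (Fin N) ℝ} (h : ∀ i j, 0 ≤ M i j)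
    {i j : Fin N} (hij : i ≠ j) (k : ℕ) :
    (M i i ^ 2 + M i j * M j i) ^ k ≤ (M ^ (2 * k)) i i := by
  set t := M i i ^ 2 + M i j * M j i with ht
  have ht0 : 0 ≤ t := add_nonneg (sq_nonneg _) (mul_nonneg (h i j) (h j i))
  have h2 : t ≤ (M ^ 2) i i := by
    rw [pow_two, Matrix.mul_apply]
    have hsub : ∑ l ∈ ({i, j} : Finset (Fin N)), M i l * M l i ≤ ∑ l, M i l * M l i :=
      Finset.sum_le_sum_of_subset_of_nonneg (Finset.subset_univ _)
        (fun l _ _ => mul_nonneg (h i l) (h l i))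
    rw [Finset.sum_insert (by simpa using hij), Finset.sum_singleton] at hsub
    calc t = M i i * M i i + M i j * M j i := by rw [ht]; ring
      _ ≤ ∑ l, M i l * M l i := hsub
  induction k with
  | zero => simp
  | succ k ih =>
    have hstep : (M ^ (2 * k)) i i * (M ^ 2) i i ≤ (M ^ (2 * (k + 1))) i i := by
      have hsplit : M ^ (2 * (k + 1)) = M ^ (2 * k) * M ^ 2 := by
        rw [Nat.mul_succ, pow_add]
      rw [hsplit, Matrix.mul_apply]
      exact Finset.single_le_sum
        (f := fun l => (M ^ (2 * k)) i l * (M ^ 2) l i)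
        (fun l _ => mul_nonneg (pow_entry_nonneg h _ i l) (pow_entry_nonneg h _ l i))
        (Finset.mem_univ i)
    calc t ^ (k + 1) = t ^ k * t := pow_succ t k
      _ ≤ (M ^ (2 * k)) i i * (M ^ 2) i i :=
          mul_le_mul ih h2 ht0 (pow_entry_nonneg h _ i i)
      _ ≤ (M ^ (2 * (k + 1))) i i := hstep

end Aux

theorem stmt8 {n : ℕ} (hn : 2 ≤ n) (G : Digraph (Fin n)) (hG : Loopless G) (hsc : SConn G)
    (α : ℝ) (h0 : 0 ≤ α) (h1 : α < 1) :
    α * (⨆ i : Fin n, transm G i) < mualpha α G := by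
  have hn0 : 0 < n := lt_of_lt_of_le two_pos hn
  have : Nonempty (Fin n) := ⟨⟨0, hn0⟩⟩
  obtain ⟨i₀, hi₀⟩ := Finite.exists_max (transm G)
  have hsup : (⨆ i : Fin n, transm G i) = transm G i₀ :=
    le_antisymm (ciSup_le hi₀) (le_ciSup (Set.Finite.bddAbove (Set.finite_range _)) i₀)
  obtain ⟨j, hj⟩ := Fintype.exists_ne_of_one_lt_card
    (by rw [Fintype.card_fin]; omega) i₀
  set M := Dalpha α G with hM
  have hMapp : ∀ a b : Fin n, M a b
      = α * (Matrix.diagonal (transm G)) a b + (1 - α) * (ddist G a b : ℝ) := by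
    intro a b
    simp [hM, Dalpha, Matrix.add_apply, Matrix.smul_apply, smul_eq_mul]
  have hMnn : ∀ a b : Fin n, 0 ≤ M a b := by
    intro a b
    rw [hMapp]
    have hd : (0:ℝ) ≤ (Matrix.diagonal (transm G)) a b := by
      by_cases hab : a = b
      · subst hab; simp [Matrix.diagonal_apply_eq]; exact transm_nonneg G a
      · simp [Matrix.diagonal_apply_ne _ hab]
    exact add_nonneg (mul_nonneg h0 hd)
      (mul_nonneg (by linarith) (Nat.cast_nonneg _))
  have hdiag : M i₀ i₀ = α * transm G i₀ := by
    rw [hMapp, Matrix.diagonal_apply_eq, ddist_self]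
    simp
  have hb : (1 - α) ≤ M i₀ j := by
    rw [hMapp, Matrix.diagonal_apply_ne _ (Ne.symm hj)]
    have h1d : (1:ℝ) ≤ (ddist G i₀ j : ℝ) := by
      exact_mod_cast one_le_ddist G hsc (Ne.symm hj)
    nlinarith
  have hc : (1 - α) ≤ M j i₀ := by
    rw [hMapp, Matrix.diagonal_apply_ne _ hj]
    have h1d : (1:ℝ) ≤ (ddist G j i₀ : ℝ) := by
      exact_mod_cast one_le_ddist G hsc hj
    nlinarith
  set a := M i₀ i₀ with ha
  set t := M i₀ i₀ ^ 2 + M i₀ j * M j i₀ with htdef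
  have ha0 : 0 ≤ a := hMnn i₀ i₀
  have hbc : (1 - α) ^ 2 ≤ M i₀ j * M j i₀ := by nlinarith
  have hta : a ^ 2 < t := by nlinarith
  have ht0 : 0 < t := lt_of_le_of_lt (sq_nonneg a) hta
  set ρ := specRad M with hρdef
  obtain ⟨hρ0, -⟩ := specRad_spec hn0 M
  -- key inequality: for all k ≥ 1, t ^ k ≤ n * (ρ ^ 2) ^ k
  have hkey : ∀ k : ℕ, 0 < k → t ^ k ≤ n * (ρ ^ 2) ^ k := by
    intro k hk
    have h1' : t ^ k ≤ (M ^ (2 * k)) i₀ i₀ :=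
      pow_two_k_diag_ge hMnn (Ne.symm hj) k
    have h2' : (M ^ (2 * k)) i₀ i₀ ≤ (M ^ (2 * k)).trace := by
      rw [Matrix.trace]
      exact Finset.single_le_sum
        (f := fun l => (M ^ (2 * k)).diag l)
        (fun l _ => pow_entry_nonneg hMnn _ l l) (Finset.mem_univ i₀)
    have h3' : (M ^ (2 * k)).trace ≤ n * ρ ^ (2 * k) :=
      trace_pow_le hn0 M (by omega)
    have hpow : ρ ^ (2 * k) = (ρ ^ 2) ^ k := by rw [← pow_mul]
    rw [hpow] at h3'
    linarith
  -- conclude t ≤ ρ ^ 2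
  have htρ : t ≤ ρ ^ 2 := by
    by_contra hlt
    push_neg at hlt
    set q := ρ ^ 2 / t with hq
    have hq0 : 0 ≤ q := div_nonneg (sq_nonneg ρ) ht0.le
    have hq1 : q < 1 := (div_lt_one ht0).mpr hlt
    have hqk : ∀ k : ℕ, 0 < k → (1 : ℝ) / n ≤ q ^ k := by
      intro k hk
      have htk : 0 < t ^ k := pow_pos ht0 k
      have hn' : (0:ℝ) < n := by positivity
      rw [hq, div_pow, div_le_div_iff₀ hn' htk, one_mul]
      nlinarith [hkey k hk]
    have htend := tendsto_pow_atTop_nhds_zero_of_lt_one hq0 hq1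
    have hev : ∀ᶠ k : ℕ in Filter.atTop, q ^ k < 1 / n :=
      htend.eventually (gt_mem_nhds (by positivity : (0:ℝ) < 1 / n))
    obtain ⟨k, hk1, hk2⟩ := (hev.and (Filter.eventually_ge_atTop 1)).exists
    exact absurd (hqk k hk2) (not_le.mpr hk1)
  have haρ : a < ρ := by nlinarith
  have hgoal : α * transm G i₀ < mualpha α G := by
    have : mualpha α G = ρ := rfl
    rw [this, ← hdiag]
    exact haρ
  rw [hsup]
  exact hgoal
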